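/- Let p be a prime, S a finite p-group, X a finite bifree (S,S)-biset, and P ≤ S. Then: (i) for every injective homomorphism φ: P → S, |C_S(φ(P))| divides |X^{(P,φ)}|; and (ii) the sum over a set of representatives [φ] of the S-conjugacy classes of injective homomorphisms φ: P → S (where φ ∼ c_s∘φ for s ∈ S) of the integers |X^{(P,φ)}|/|C_S(φ(P))| is congruent to |X|/|S| modulo p. -/

import Mathlib

/-! ## Bisets -/

/-- A `(G,H)`-biset structure on a type `X`: a left `H`-action and a right `G`-action
that commute with each other. -/
structure BisetAction (G H : Type*) [Group G] [Group H] (X : Type*) where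
  /-- the left `H`-action -/
  smul : H → X → X
  /-- the right `G`-action -/
  rmul : X → G → X
  one_smul : ∀ x, smul 1 x = x
  mul_smul : ∀ h₁ h₂ x, smul (h₁ * h₂) x = smul h₁ (smul h₂ x)
  rmul_one : ∀ x, rmul x 1 = x
  rmul_mul : ∀ x g₁ g₂, rmul x (g₁ * g₂) = rmul (rmul x g₁) g₂
  smul_rmul : ∀ h x g, rmul (smul h x) g = smul h (rmul x g)

namespace BisetAction

variable {G H K : Type*} [Group G] [Group H] [Group K] {X Y Z : Type*}

lemma smul_smul (A : BisetAction G H X) (h₁ h₂ : H) (x : X) :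
    A.smul h₁ (A.smul h₂ x) = A.smul (h₁ * h₂) x := (A.mul_smul h₁ h₂ x).symm

lemma rmul_rmul (A : BisetAction G H X) (x : X) (g₁ g₂ : G) :
    A.rmul (A.rmul x g₁) g₂ = A.rmul x (g₁ * g₂) := (A.rmul_mul x g₁ g₂).symm

/-- The biset is left-free. -/
def LeftFree (A : BisetAction G H X) : Prop := ∀ (h : H) (x : X), A.smul h x = x → h = 1

/-- The biset is right-free. -/
def RightFree (A : BisetAction G H X) : Prop := ∀ (g : G) (x : X), A.rmul x g = x → g = 1

/-- The biset is bifree: both actions are free. -/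
def Bifree (A : BisetAction G H X) : Prop := A.LeftFree ∧ A.RightFree

/-- The fixed-point set `X^{(P,φ)} = {x | x·u = φ(u)·x for all u ∈ P}`. -/
def Fix (A : BisetAction G H X) (P : Subgroup G) (φ : P →* H) : Set X :=
  {x | ∀ u : P, A.rmul x u = A.smul (φ u) x}

/-- The opposite biset: same underlying set, with the two actions reversed
(`g·x·h` in `op A` is `h⁻¹·x·g⁻¹` in `A`). -/
def op (A : BisetAction G H X) : BisetAction H G X where
  smul g x := A.rmul x g⁻¹
  rmul x h := A.smul h⁻¹ x
  one_smul x := by simpa using A.rmul_one x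
  mul_smul g₁ g₂ x := by rw [mul_inv_rev, A.rmul_mul]
  rmul_one x := by simpa using A.one_smul x
  rmul_mul x h₁ h₂ := by rw [mul_inv_rev, A.mul_smul]
  smul_rmul g x h := (A.smul_rmul h⁻¹ x g⁻¹).symm

/-- The setoid of left `H`-orbits. -/
def leftOrbitSetoid (A : BisetAction G H X) : Setoid X where
  r x y := ∃ h : H, y = A.smul h x
  iseqv := by
    refine ⟨fun x => ⟨1, (A.one_smul x).symm⟩, ?_, ?_⟩
    · rintro x y ⟨h, rfl⟩
      exact ⟨h⁻¹, by rw [A.smul_smul, inv_mul_cancel, A.one_smul]⟩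
    · rintro x y z ⟨h₁, rfl⟩ ⟨h₂, rfl⟩
      exact ⟨h₂ * h₁, A.smul_smul h₂ h₁ x⟩

/-- The set of left `H`-orbits of the biset. -/
def leftOrbits (A : BisetAction G H X) : Type _ := Quotient (A.leftOrbitSetoid)

/-- Restricting the right action along a homomorphism `φ : P →* G`. -/
def restrictRight (A : BisetAction G H X) {P : Type*} [Group P] (φ : P →* G) :
    BisetAction P H X where
  smul := A.smul
  rmul x u := A.rmul x (φ u)
  one_smul := A.one_smul
  mul_smul := A.mul_smul
  rmul_one x := by rw [map_one, A.rmul_one]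
  rmul_mul x u₁ u₂ := by rw [map_mul, A.rmul_mul]
  smul_rmul h x u := A.smul_rmul h x (φ u)

/-- Restricting the left action along a homomorphism `φ : P →* H`. -/
def restrictLeft (A : BisetAction G H X) {P : Type*} [Group P] (φ : P →* H) :
    BisetAction G P X where
  smul u x := A.smul (φ u) x
  rmul := A.rmul
  one_smul x := by rw [map_one, A.one_smul]
  mul_smul u₁ u₂ x := by rw [map_mul, A.mul_smul]
  rmul_one := A.rmul_one
  rmul_mul := A.rmul_mul
  smul_rmul u x g := A.smul_rmul (φ u) x g

end BisetAction

/-- An isomorphism of `(G,H)`-bisets: an equivalence of underlying sets commuting with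
both actions. -/
structure BisetIso {G H : Type*} [Group G] [Group H] {X Y : Type*}
    (A : BisetAction G H X) (B : BisetAction G H Y) extends X ≃ Y where
  map_smul : ∀ (h : H) (x : X), toEquiv (A.smul h x) = B.smul h (toEquiv x)
  map_rmul : ∀ (x : X) (g : G), toEquiv (A.rmul x g) = B.rmul (toEquiv x) g

/-- Two homomorphisms `φ ψ : P →* S` are `S`-conjugate if `ψ = c_s ∘ φ` for some `s ∈ S`. -/
def HomSConj {S : Type*} [Group S] {P : Subgroup S} (φ ψ : P →* S) : Prop :=
  ∃ s : S, ∀ u : P, ψ u = s * φ u * s⁻¹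

-- auxiliary
lemma free_count' {C Y : Type*} [Group C] [Finite Y]
    (sm : C → Y → Y) (h1 : ∀ y, sm 1 y = y)
    (hm : ∀ c d y, sm (c * d) y = sm c (sm d y))
    (hf : ∀ c y, sm c y = y → c = 1)
    (st : Setoid Y) (hst : ∀ x y, st.r x y ↔ ∃ c, y = sm c x) :
    Nat.card Y = Nat.card C * Nat.card (Quotient st) := by
  have hcan : ∀ (c : C) (z : Y), sm c⁻¹ (sm c z) = z := fun c z => by
    rw [← hm, inv_mul_cancel, h1]
  have key : Nat.card (C × Quotient st) = Nat.card Y := by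
    apply Nat.card_eq_of_bijective (fun p => sm p.1 p.2.out)
    constructor
    · rintro ⟨c, q⟩ ⟨c', q'⟩ h
      dsimp at h
      have hq : q = q' := by
        have hr : st.r q.out q'.out := (hst _ _).2 ⟨c'⁻¹ * c, by rw [hm, h, hcan]⟩
        calc q = Quotient.mk st q.out := (Quotient.out_eq q).symm
          _ = Quotient.mk st q'.out := Quotient.sound hr
          _ = q' := Quotient.out_eq q'
      subst hq
      have hcc : c'⁻¹ * c = 1 := hf _ _ (by rw [hm, h, hcan])
      have : c' = c := inv_mul_eq_one.mp hcc
      simp [this]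
    · intro y
      have hr : st.r (Quotient.mk st y).out y :=
        Quotient.exact (Quotient.out_eq (Quotient.mk st y))
      obtain ⟨c, hc⟩ := (hst _ _).1 hr
      exact ⟨⟨c, Quotient.mk st y⟩, hc.symm⟩
  rw [← key, Nat.card_prod]

/-- The setoid of `C_S(φ(P))`-orbits on the fixed-point set. -/
def cfixSetoid {S X : Type*} [Group S] (A : BisetAction S S X) (P : Subgroup S)
    (φ : P →* S) : Setoid (A.Fix P φ) where
  r x y := ∃ c ∈ Subgroup.centralizer ((φ.range : Subgroup S) : Set S),
    (y : X) = A.smul c (x : X)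
  iseqv := by
    refine ⟨fun x => ⟨1, one_mem _, (A.one_smul _).symm⟩, ?_, ?_⟩
    · rintro x y ⟨c, hc, hxy⟩
      exact ⟨c⁻¹, inv_mem hc, by rw [hxy, A.smul_smul, inv_mul_cancel, A.one_smul]⟩
    · rintro x y z ⟨c, hc, h1⟩ ⟨d, hd, h2⟩
      exact ⟨d * c, mul_mem hd hc, by rw [h2, h1, A.smul_smul]⟩


/-- Let `S` be a finite `p`-group, `X` a finite bifree `(S,S)`-biset and
`P ≤ S`.  Then (i) `|C_S(φ(P))|` divides `|X^{(P,φ)}|` for every injective `φ : P → S`,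
and (ii) for any set `R` of representatives of the `S`-conjugacy classes of injective
homomorphisms `P → S`, `∑_{φ ∈ R} |X^{(P,φ)}|/|C_S(φ(P))| ≡ |X|/|S| (mod p)`. -/
theorem fixedPoint_congruence_pointwise
    (p : ℕ) (hp : p.Prime) (S : Type*) [Group S] [Finite S] (hS : IsPGroup p S)
    (X : Type*) [Finite X] (A : BisetAction S S X) (hA : A.Bifree) (P : Subgroup S) :
    (∀ φ : P →* S, Function.Injective φ →
      Nat.card (Subgroup.centralizer ((φ.range : Subgroup S) : Set S)) ∣
        Nat.card (A.Fix P φ)) ∧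
    (∀ R : Finset (P →* S),
      (∀ φ ∈ R, Function.Injective φ) →
      (∀ φ : P →* S, Function.Injective φ → ∃ ψ ∈ R, HomSConj φ ψ) →
      (∀ φ ∈ R, ∀ ψ ∈ R, HomSConj φ ψ → φ = ψ) →
      (∑ φ ∈ R, Nat.card (A.Fix P φ) /
          Nat.card (Subgroup.centralizer ((φ.range : Subgroup S) : Set S))) ≡
        Nat.card X / Nat.card S [MOD p]) := by
  classical
  haveI : Fact p.Prime := ⟨hp⟩
  obtain ⟨hlf, hrf⟩ := hA
  have scan : ∀ (s : S) (x : X), A.smul s⁻¹ (A.smul s x) = x := fun s x => by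
    rw [A.smul_smul, inv_mul_cancel, A.one_smul]
  have smul_injL : ∀ (s t : S) (x : X), A.smul s x = A.smul t x → s = t := by
    intro s t x h
    have h1 : A.smul (t⁻¹ * s) x = x := by rw [A.mul_smul, h, scan]
    have := hlf _ _ h1
    exact (inv_mul_eq_one.mp this).symm
  -- counting for each φ
  have count_fix : ∀ φ : P →* S,
      Nat.card (A.Fix P φ) =
        Nat.card (Subgroup.centralizer ((φ.range : Subgroup S) : Set S)) *
          Nat.card (Quotient (cfixSetoid A P φ)) := by
    intro φ
    have hmem : ∀ (z : S), z ∈ Subgroup.centralizer ((φ.range : Subgroup S) : Set S) →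
        ∀ x : X, x ∈ A.Fix P φ → A.smul z x ∈ A.Fix P φ := by
      intro z hz x hx u
      have hcomm : φ u * z = z * φ u :=
        Subgroup.mem_centralizer_iff.mp hz (φ u) ⟨u, rfl⟩
      rw [A.smul_rmul, hx u, A.smul_smul, A.smul_smul, ← hcomm]
    refine free_count'
      (fun c y => ⟨A.smul c y, hmem c c.2 y y.2⟩) ?_ ?_ ?_ (cfixSetoid A P φ) ?_
    · intro y; exact Subtype.ext (A.one_smul y)
    · intro c d y; exact Subtype.ext (A.mul_smul c d y)
    · intro c y h
      have : A.smul (c : S) (y : X) = y := congrArg Subtype.val h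
      exact Subtype.ext (hlf _ _ this)
    · intro x y
      constructor
      · rintro ⟨c, hc, h⟩; exact ⟨⟨c, hc⟩, Subtype.ext h⟩
      · rintro ⟨c, h⟩; exact ⟨c, c.2, congrArg Subtype.val h⟩
  refine ⟨fun φ _ => ⟨_, count_fix φ⟩, ?_⟩
  intro R hR1 hR2 hR3
  set st := A.leftOrbitSetoid with hstdef
  -- the P-action on left orbits
  letI act : MulAction P (Quotient st) :=
    { smul := fun u => Quotient.lift (fun x => Quotient.mk st (A.rmul x ((u : S))⁻¹))
        (by rintro a b ⟨s, rfl⟩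
            exact Quotient.sound ⟨s, A.smul_rmul s a _⟩)
      one_smul := fun q => Quotient.inductionOn q (fun x => by
        show Quotient.mk st (A.rmul x (((1 : P) : S))⁻¹) = Quotient.mk st x
        rw [OneMemClass.coe_one, inv_one, A.rmul_one])
      mul_smul := fun u v q => Quotient.inductionOn q (fun x => by
        show Quotient.mk st (A.rmul x (((u * v : P) : S))⁻¹) =
          Quotient.mk st (A.rmul (A.rmul x ((v : S))⁻¹) ((u : S))⁻¹)
        rw [Subgroup.coe_mul, mul_inv_rev, A.rmul_mul]) }
  have smul_mk : ∀ (u : P) (x : X),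
      u • (Quotient.mk st x) = Quotient.mk st (A.rmul x ((u : S))⁻¹) := fun _ _ => rfl
  -- mk of a fixed point is a fixed orbit
  have hfix_mk : ∀ (φ : P →* S) (x : X), x ∈ A.Fix P φ →
      Quotient.mk st x ∈ MulAction.fixedPoints P (Quotient st) := by
    intro φ x hx u
    rw [smul_mk]
    have h1 : A.rmul x ((u : S))⁻¹ = A.smul (φ u⁻¹) x := by
      have := hx u⁻¹
      rwa [show ((u⁻¹ : P) : S) = ((u : S))⁻¹ from rfl] at this
    rw [h1]
    exact (Quotient.sound (⟨φ u⁻¹, rfl⟩ : st.r x (A.smul (φ u⁻¹) x))).symm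
  -- conjugation transport
  have hshift : ∀ (φ ψ : P →* S) (x y : X), x ∈ A.Fix P φ → y ∈ A.Fix P ψ →
      ∀ s : S, y = A.smul s x → ∀ u : P, ψ u = s * φ u * s⁻¹ := by
    intro φ ψ x y hx hy s hys u
    have h1 : A.rmul y u = A.smul (ψ u * s) x := by
      rw [hy u, hys, A.smul_smul]
    have h2 : A.rmul y u = A.smul (s * φ u) x := by
      rw [hys, A.smul_rmul, hx u, A.smul_smul]
    have h3 : ψ u * s = s * φ u := smul_injL _ _ _ (h1.symm.trans h2)
    rw [← h3, mul_assoc, mul_inv_cancel, mul_one]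
  -- every fixed orbit comes from some φ ∈ R
  have hcov : ∀ q ∈ MulAction.fixedPoints P (Quotient st),
      ∃ φ ∈ R, ∃ x, x ∈ A.Fix P φ ∧ Quotient.mk st x = q := by
    intro q hq
    set x := q.out with hxdef
    have hmkx : Quotient.mk st x = q := Quotient.out_eq q
    have hex : ∀ u : P, ∃ s : S, A.rmul x (u : S) = A.smul s x := by
      intro u
      have h1 : u⁻¹ • q = q := hq u⁻¹
      rw [← hmkx, smul_mk] at h1
      have h2 : Quotient.mk st (A.rmul x (u : S)) = Quotient.mk st x := by
        rwa [show (((u⁻¹ : P) : S))⁻¹ = (u : S) by simp] at h1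
      have h3 : st.r x (A.rmul x (u : S)) := st.iseqv.symm (Quotient.exact h2)
      exact h3
    set σ : P → S := fun u => Classical.choose (hex u) with hσdef
    have hσ : ∀ u : P, A.rmul x (u : S) = A.smul (σ u) x :=
      fun u => Classical.choose_spec (hex u)
    have hmul : ∀ u v : P, σ (u * v) = σ u * σ v := by
      intro u v
      apply smul_injL _ _ x
      rw [← hσ (u * v), ← A.smul_smul, ← hσ v, ← A.smul_rmul, ← hσ u,
        show ((u * v : P) : S) = (u : S) * (v : S) from rfl, A.rmul_mul]
    set φ0 : P →* S := MonoidHom.mk' σ hmul with hφ0def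
    have hxfix : x ∈ A.Fix P φ0 := fun u => hσ u
    have hinj : Function.Injective φ0 := by
      refine (injective_iff_map_eq_one φ0).mpr (fun u hu => ?_)
      have h0 : σ u = 1 := hu
      have h1 : A.rmul x (u : S) = x := by rw [hσ u, h0, A.one_smul]
      exact Subtype.ext (hrf _ _ h1)
    obtain ⟨ψ, hψR, s, hs⟩ := hR2 φ0 hinj
    refine ⟨ψ, hψR, A.smul s x, ?_, ?_⟩
    · intro u
      have h0 : φ0 u = σ u := rfl
      have hgrp : (s * σ u * s⁻¹) * s = s * σ u := by group
      rw [A.smul_rmul, hσ u, A.smul_smul, hs u, h0, A.smul_smul, hgrp]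
    · rw [← hmkx]
      exact (Quotient.sound (⟨s, rfl⟩ : st.r x (A.smul s x))).symm
  -- the image sets
  set T : (P →* S) → Set (Quotient st) := fun φ => Quotient.mk st '' (A.Fix P φ) with hTdef
  have hT_fixed : ∀ φ : P →* S, ∀ q ∈ T φ, q ∈ MulAction.fixedPoints P (Quotient st) := by
    rintro φ q ⟨x, hx, rfl⟩
    exact hfix_mk φ x hx
  have hdisj : ∀ φ ∈ R, ∀ ψ ∈ R, ∀ q, q ∈ T φ → q ∈ T ψ → φ = ψ := by
    rintro φ hφ ψ hψ q ⟨x, hx, rfl⟩ ⟨y, hy, hxy⟩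
    obtain ⟨s, rfl⟩ : st.r y x := Quotient.exact hxy
    exact (hR3 ψ hψ φ hφ ⟨s, hshift ψ φ y _ hy hx s rfl⟩).symm
  -- card of T φ
  have cardT : ∀ φ : P →* S,
      Nat.card (T φ) = Nat.card (Quotient (cfixSetoid A P φ)) := by
    intro φ
    symm
    apply Nat.card_eq_of_bijective
      (Quotient.lift (fun x : A.Fix P φ =>
        (⟨Quotient.mk st (x : X), Set.mem_image_of_mem _ x.2⟩ : T φ))
        (by rintro a b ⟨c, hc, h⟩
            exact Subtype.ext (Quotient.sound ⟨c, h⟩)))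
    constructor
    · intro q q'
      refine Quotient.inductionOn₂ q q' (fun a b h => ?_)
      have h1 : Quotient.mk st (a : X) = Quotient.mk st (b : X) := by
        simpa using congrArg Subtype.val h
      obtain ⟨s, hs⟩ : st.r (a : X) (b : X) := Quotient.exact h1
      have hc : s ∈ Subgroup.centralizer ((φ.range : Subgroup S) : Set S) := by
        rw [Subgroup.mem_centralizer_iff]
        rintro g ⟨u, rfl⟩
        have h2 := hshift φ φ a b a.2 b.2 s hs u
        conv_lhs => rw [h2]
        group
      exact Quotient.sound ⟨s, hc, hs⟩
    · rintro ⟨q, x, hx, rfl⟩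
      exact ⟨Quotient.mk (cfixSetoid A P φ) ⟨x, hx⟩, rfl⟩
  -- partition of the fixed points
  haveI : Fintype (Quotient st) := Fintype.ofFinite _
  haveI hTfin : ∀ φ : R, Fintype (T φ.1) := fun φ => Fintype.ofFinite _
  haveI : Fintype (MulAction.fixedPoints P (Quotient st)) := Fintype.ofFinite _
  have hFcard : Nat.card (MulAction.fixedPoints P (Quotient st)) =
      ∑ φ ∈ R, Nat.card (T φ) := by
    have hbij : Function.Bijective
        (fun z : (Σ φ : R, T φ.1) =>
          (⟨z.2.1, hT_fixed z.1.1 z.2.1 z.2.2⟩ :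
            MulAction.fixedPoints P (Quotient st))) := by
      constructor
      · rintro ⟨⟨φ, hφ⟩, q, hq⟩ ⟨⟨ψ, hψ⟩, q', hq'⟩ h
        have hqq' : q = q' := congrArg Subtype.val h
        subst hqq'
        have : φ = ψ := hdisj φ hφ ψ hψ q hq hq'
        subst this
        rfl
      · rintro ⟨q, hq⟩
        obtain ⟨φ, hφ, x, hx, rfl⟩ := hcov q hq
        exact ⟨⟨⟨φ, hφ⟩, ⟨_, Set.mem_image_of_mem _ hx⟩⟩, rfl⟩
    rw [← Nat.card_eq_of_bijective _ hbij]
    have : Nat.card (Σ φ : R, T φ.1) = ∑ φ : R, Nat.card (T φ.1) := by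
      rw [Nat.card_eq_fintype_card, Fintype.card_sigma]
      exact Finset.sum_congr rfl (fun φ _ => (Nat.card_eq_fintype_card).symm)
    rw [this, Finset.sum_coe_sort R (fun φ => Nat.card (T φ))]
  -- global counting
  have hQcard : Nat.card X = Nat.card S * Nat.card (Quotient st) :=
    free_count' A.smul A.one_smul A.mul_smul hlf st (fun x y => Iff.rfl)
  have hSpos : 0 < Nat.card S := Nat.card_pos
  have hXS : Nat.card X / Nat.card S = Nat.card (Quotient st) := by
    rw [hQcard, Nat.mul_div_cancel_left _ hSpos]
  have hsum : (∑ φ ∈ R, Nat.card (A.Fix P φ) /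
      Nat.card (Subgroup.centralizer ((φ.range : Subgroup S) : Set S))) =
      Nat.card (MulAction.fixedPoints P (Quotient st)) := by
    rw [hFcard]
    refine Finset.sum_congr rfl (fun φ _ => ?_)
    rw [count_fix φ, Nat.mul_div_cancel_left _ Nat.card_pos, cardT φ]
  rw [hsum, hXS]
  exact ((hS.to_subgroup P).card_modEq_card_fixedPoints (Quotient st)).symm
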